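/- Let k ≥ 1, let f : S¹ → ℝ^{2k+1} be a continuous map on the unit circle S¹ ⊆ ℂ with f(−z) = −f(z) for all z ∈ S¹, and let w₀, …, w_{2k} be any 2k+1 points of S¹. Then there exist signs e₀, …, e_{2k} ∈ {+1, −1}, real numbers λ₀, …, λ_{2k} ≥ 0 with λ₀ + ⋯ + λ_{2k} = 1, and a point z ∈ S¹ such that Σ_{i=0}^{2k} λᵢ f(eᵢ·z·wᵢ) = 0. Moreover, if the vectors f(w₀), …, f(w_{2k}) all lie in some 2k-dimensional linear subspace of ℝ^{2k+1}, then one may take z = 1. -/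

import Mathlib

open Metric

/-- Auxiliary: from a nontrivial vanishing linear combination one gets signs and
convex coefficients. -/
lemma signs_aux {n : ℕ} {E : Type*} [AddCommGroup E] [Module ℝ E]
    (v : Fin n → E) (c : Fin n → ℝ) (hc : c ≠ 0)
    (hsum : ∑ i, c i • v i = 0) :
    ∃ e lam : Fin n → ℝ, (∀ i, e i = 1 ∨ e i = -1) ∧ (∀ i, 0 ≤ lam i) ∧
      (∑ i, lam i = 1) ∧ ∑ i, (lam i * e i) • v i = 0 := by
  obtain ⟨i₀, hi₀⟩ := Function.ne_iff.mp hc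
  set s := ∑ j, |c j| with hs
  have hspos : 0 < s :=
    Finset.sum_pos' (fun j _ => abs_nonneg _) ⟨i₀, Finset.mem_univ _, abs_pos.mpr hi₀⟩
  refine ⟨fun i => if 0 ≤ c i then 1 else -1, fun i => |c i| / s,
    fun i => by by_cases h : 0 ≤ c i <;> simp [h],
    fun i => div_nonneg (abs_nonneg _) hspos.le, ?_, ?_⟩
  · rw [← Finset.sum_div, ← hs, div_self hspos.ne']
  · have key : ∀ i, (|c i| / s * (if 0 ≤ c i then (1:ℝ) else -1)) = s⁻¹ * c i := by
      intro i; by_cases h : 0 ≤ c i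
      · rw [if_pos h, abs_of_nonneg h]; ring
      · rw [if_neg h, abs_of_neg (not_le.mp h)]; ring
    calc ∑ i, (|c i| / s * (if 0 ≤ c i then (1:ℝ) else -1)) • v i
        = ∑ i, s⁻¹ • (c i • v i) := by
          refine Finset.sum_congr rfl fun i _ => ?_
          rw [key i, mul_smul]
      _ = s⁻¹ • ∑ i, c i • v i := by rw [Finset.smul_sum]
      _ = 0 := by rw [hsum, smul_zero]

/-- Lemma 2.1 of the paper. For an odd continuous map
`f : S¹ → ℝ^{2k+1}` and any `2k+1` points `w₀, …, w_{2k}` of the circle, there are signs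
`eᵢ`, convex coefficients `λᵢ` and a point `z ∈ S¹` with `∑ λᵢ f(eᵢ z wᵢ) = 0`;
moreover if the `f(wᵢ)` lie in a `2k`-dimensional subspace one may take `z = 1`. -/
theorem stmt0 (k : ℕ) (hk : 1 ≤ k)
    (f : ℂ → EuclideanSpace ℝ (Fin (2 * k + 1)))
    (hf : ContinuousOn f (sphere (0 : ℂ) 1))
    (hodd : ∀ z ∈ sphere (0 : ℂ) 1, f (-z) = -f z)
    (w : Fin (2 * k + 1) → ℂ) (hw : ∀ i, w i ∈ sphere (0 : ℂ) 1) :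
    (∃ (e : Fin (2 * k + 1) → ℝ) (lam : Fin (2 * k + 1) → ℝ) (z : ℂ),
      (∀ i, e i = 1 ∨ e i = -1) ∧ (∀ i, 0 ≤ lam i) ∧ (∑ i, lam i = 1) ∧
      z ∈ sphere (0 : ℂ) 1 ∧
      ∑ i, lam i • f ((e i : ℂ) * z * w i) = 0) ∧
    ((∃ V : Submodule ℝ (EuclideanSpace ℝ (Fin (2 * k + 1))),
        Module.finrank ℝ V = 2 * k ∧ ∀ i, f (w i) ∈ V) →
      ∃ (e : Fin (2 * k + 1) → ℝ) (lam : Fin (2 * k + 1) → ℝ),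
        (∀ i, e i = 1 ∨ e i = -1) ∧ (∀ i, 0 ≤ lam i) ∧ (∑ i, lam i = 1) ∧
        ∑ i, lam i • f ((e i : ℂ) * w i) = 0) := by
  have hmem : ∀ z ∈ sphere (0 : ℂ) 1, ∀ j, z * w j ∈ sphere (0 : ℂ) 1 := by
    intro z hz j
    rw [mem_sphere_zero_iff_norm] at *
    rw [norm_mul, hz, mem_sphere_zero_iff_norm.mp (hw j), one_mul]
  constructor
  · -- Part 1: determinant is odd and continuous on the circle, hence vanishes.
    set M : ℂ → Matrix (Fin (2 * k + 1)) (Fin (2 * k + 1)) ℝ :=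
      fun z => Matrix.of fun i j => f (z * w j) i with hM
    have hMcont : ContinuousOn (fun z => (M z).det) (sphere (0 : ℂ) 1) := by
      have h1 : ContinuousOn M (sphere (0 : ℂ) 1) := by
        apply continuousOn_pi.mpr; intro i
        apply continuousOn_pi.mpr; intro j
        exact (PiLp.continuous_apply 2 _ i).comp_continuousOn
          (hf.comp ((continuous_mul_right (w j)).continuousOn) (fun z hz => hmem z hz j))
      exact (Continuous.matrix_det continuous_id).comp_continuousOn h1
    have hModd : ∀ z ∈ sphere (0 : ℂ) 1, (M (-z)).det = -(M z).det := by
      intro z hz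
      have hMz : M (-z) = -(M z) := by
        ext i j
        show f (-z * w j) i = -(f (z * w j) i)
        rw [neg_mul, hodd _ (hmem z hz j)]
        rfl
      rw [hMz, Matrix.det_neg, Fintype.card_fin, Odd.neg_one_pow ⟨k, by ring⟩, neg_one_mul]
    have h1s : (1 : ℂ) ∈ sphere (0 : ℂ) 1 := by simp
    have hneg1s : (-1 : ℂ) ∈ sphere (0 : ℂ) 1 := by simp
    have hconn : IsPreconnected (sphere (0 : ℂ) 1) := by
      refine (isConnected_sphere ?_ 0 zero_le_one).isPreconnected
      rw [Complex.rank_real_complex]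
      exact Cardinal.one_lt_two
    obtain ⟨z₀, hz₀, hdet⟩ : ∃ z ∈ sphere (0 : ℂ) 1, (M z).det = 0 := by
      have hd : (M (-1)).det = -(M 1).det := hModd 1 h1s
      rcases le_total 0 ((M 1).det) with h | h
      · obtain ⟨z, hz, hz0⟩ := hconn.intermediate_value hneg1s h1s hMcont
          (show (0:ℝ) ∈ Set.Icc ((M (-1)).det) ((M 1).det) from ⟨by rw [hd]; linarith, h⟩)
        exact ⟨z, hz, hz0⟩
      · obtain ⟨z, hz, hz0⟩ := hconn.intermediate_value h1s hneg1s hMcont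
          (show (0:ℝ) ∈ Set.Icc ((M 1).det) ((M (-1)).det) from ⟨h, by rw [hd]; linarith⟩)
        exact ⟨z, hz, hz0⟩
    obtain ⟨c, hc, hmul⟩ := Matrix.exists_mulVec_eq_zero_iff.mpr hdet
    have hsum : ∑ j, c j • f (z₀ * w j) = 0 := by
      ext i
      have hthis := congrFun hmul i
      simp only [Matrix.mulVec, dotProduct, Matrix.of_apply, Pi.zero_apply, hM] at hthis
      rw [show (∑ x, c x • f (z₀ * w x)) i = ∑ x, (c x • f (z₀ * w x)) i from
        (congrFun (WithLp.ofLp_sum _ _ _ _) i).trans (Finset.sum_apply i Finset.univ _)]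
      simpa [PiLp.smul_apply, smul_eq_mul, mul_comm] using hthis
    obtain ⟨e, lam, he, hlam, hlam1, hzero⟩ := signs_aux (fun j => f (z₀ * w j)) c hc hsum
    refine ⟨e, lam, z₀, he, hlam, hlam1, hz₀, ?_⟩
    rw [← hzero]
    refine Finset.sum_congr rfl fun i _ => ?_
    rcases he i with h | h
    · rw [h]; norm_num
    · rw [h]
      have hc : ((-1 : ℝ) : ℂ) * z₀ * w i = -(z₀ * w i) := by push_cast; ring
      rw [hc, hodd _ (hmem z₀ hz₀ i), mul_neg_one, neg_smul, smul_neg]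
  · -- Part 2: 2k+1 vectors in a 2k-dimensional subspace are dependent.
    rintro ⟨V, hVrank, hVmem⟩
    set g : Fin (2 * k + 1) → V := fun i => ⟨f (w i), hVmem i⟩ with hg
    have hnli : ¬ LinearIndependent ℝ g := by
      intro h
      have := h.fintype_card_le_finrank
      rw [Fintype.card_fin, hVrank] at this
      omega
    obtain ⟨c, hc0, i, hci⟩ := Fintype.not_linearIndependent_iff.mp hnli
    have hsum : ∑ j, c j • f (w j) = 0 := by
      have := congrArg (Subtype.val : V → _) hc0
      simpa using this
    obtain ⟨e, lam, he, hlam, hlam1, hzero⟩ :=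
      signs_aux (fun j => f (w j)) c (fun h => hci (congrFun h i)) hsum
    refine ⟨e, lam, he, hlam, hlam1, ?_⟩
    rw [← hzero]
    refine Finset.sum_congr rfl fun j _ => ?_
    rcases he j with h | h
    · rw [h]; norm_num
    · rw [h]
      have hc : ((-1 : ℝ) : ℂ) * w j = -(w j) := by push_cast; ring
      rw [hc, hodd _ (hw j), mul_neg_one, neg_smul, smul_neg]
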